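/- (Remark after Proposition 6) Let T'^{ij} be a smooth symmetric tensor field on ℝ³ satisfying ∂_j T'^{ij}=0 for all i. Then the tensor field T^{ij} := ε^{kl(i} ∂_l T'^{j)}_{k} = (1/2) Σ_{k,l} ( ε^{kli} ∂_l T'_{jk} + ε^{klj} ∂_l T'_{ik} ) is symmetric, transverse (∂_j T^{ij}=0) and traceless (δ_{ij}T^{ij}=0). -/

import Mathlib

/-- Partial derivative in the k-th Cartesian coordinate direction on ℝ^D. -/
noncomputable def pd {D : ℕ} (k : Fin D) (f : (Fin D → ℝ) → ℝ) : (Fin D → ℝ) → ℝ :=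
  fun x => fderiv ℝ f x (Pi.single k 1)

/-- Three-dimensional Levi-Civita symbol with ε^{123} = 1. -/
def eps3 (i j k : Fin 3) : ℝ :=
  if (i,j,k) = (0,1,2) ∨ (i,j,k) = (1,2,0) ∨ (i,j,k) = (2,0,1) then 1
  else if (i,j,k) = (2,1,0) ∨ (i,j,k) = (1,0,2) ∨ (i,j,k) = (0,2,1) then -1
  else 0

lemma top_add_one' : ((⊤:ℕ∞):WithTop ℕ∞) + 1 ≤ ((⊤:ℕ∞):WithTop ℕ∞) := by
  exact_mod_cast (le_top : (⊤+1:ℕ∞) ≤ ⊤)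
lemma one_le_top' : (1:WithTop ℕ∞) ≤ ((⊤:ℕ∞):WithTop ℕ∞) := by
  exact_mod_cast (le_top : (1:ℕ∞) ≤ ⊤)

lemma pd_smooth {D : ℕ} (k : Fin D) {f : (Fin D → ℝ) → ℝ} (hf : ContDiff ℝ (⊤:ℕ∞) f) :
    ContDiff ℝ (⊤:ℕ∞) (pd k f) := by
  unfold pd
  exact (hf.fderiv_right top_add_one').clm_apply contDiff_const

lemma pd_comm {D : ℕ} (k l : Fin D) {f : (Fin D → ℝ) → ℝ} (hf : ContDiff ℝ (⊤:ℕ∞) f)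
    (x : Fin D → ℝ) : pd k (pd l f) x = pd l (pd k f) x := by
  have hd : Differentiable ℝ (fderiv ℝ f) :=
    (hf.fderiv_right top_add_one').differentiable (ne_of_gt (lt_of_lt_of_le zero_lt_one one_le_top'))
  have hsymm := second_derivative_symmetric (f' := fderiv ℝ f)
    (f'' := fderiv ℝ (fderiv ℝ f) x)
    (fun y => ((hf.differentiable (ne_of_gt (lt_of_lt_of_le zero_lt_one one_le_top'))) y).hasFDerivAt)
    ((hd x).hasFDerivAt) (Pi.single k 1) (Pi.single l 1)
  unfold pd
  rw [fderiv_clm_apply (hd x) (differentiableAt_const _),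
      fderiv_clm_apply (hd x) (differentiableAt_const _)]
  simpa using hsymm

lemma pd_of_eq {D : ℕ} (j : Fin D) {f g : (Fin D → ℝ) → ℝ} (h : ∀ x, f x = g x) :
    pd j f = pd j g := by
  have : f = g := funext h
  rw [this]

lemma pd_expand {u v : Fin 3 → Fin 3 → (Fin 3 → ℝ) → ℝ} (A B : Fin 3 → Fin 3 → ℝ)
    (hu : ∀ k l, Differentiable ℝ (u k l)) (hv : ∀ k l, Differentiable ℝ (v k l))
    (j : Fin 3) (x : Fin 3 → ℝ) :
    pd j (fun y => (1/2:ℝ) * ∑ k, ∑ l, (A k l * u k l y + B k l * v k l y)) x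
      = (1/2:ℝ) * ∑ k, ∑ l, (A k l * pd j (u k l) x + B k l * pd j (v k l) x) := by
  have H : HasFDerivAt (fun y => (1/2:ℝ) * ∑ k, ∑ l, (A k l * u k l y + B k l * v k l y))
      ((1/2:ℝ) • ∑ k, ∑ l, (A k l • fderiv ℝ (u k l) x + B k l • fderiv ℝ (v k l) x)) x := by
    refine HasFDerivAt.const_mul ?_ _
    refine HasFDerivAt.fun_sum fun k _ => ?_
    refine HasFDerivAt.fun_sum fun l _ => ?_
    exact (((hu k l) x).hasFDerivAt.const_mul (A k l)).add
      (((hv k l) x).hasFDerivAt.const_mul (B k l))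
  unfold pd
  rw [H.fderiv]
  simp [ContinuousLinearMap.sum_apply]

/-- Sum of partial derivatives: pd of a finite sum. -/
lemma pd_sum3 (l : Fin 3) (f : Fin 3 → (Fin 3 → ℝ) → ℝ)
    (hf : ∀ j, Differentiable ℝ (f j)) (x : Fin 3 → ℝ) :
    pd l (fun y => ∑ j, f j y) x = ∑ j, pd l (f j) x := by
  have H : HasFDerivAt (fun y => ∑ j, f j y) (∑ j, fderiv ℝ (f j) x) x :=
    HasFDerivAt.fun_sum fun j _ => ((hf j) x).hasFDerivAt
  unfold pd
  rw [H.fderiv]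
  simp [ContinuousLinearMap.sum_apply]

set_option maxHeartbeats 2000000 in
/-- remark after Proposition 6: if T'^{ij} is a smooth symmetric
transverse tensor field on ℝ³ then T^{ij} := ε^{kl(i} ∂_l T'^{j)}_k is symmetric,
transverse and traceless. -/
theorem stmt_17
    (T' : Fin 3 → Fin 3 → (Fin 3 → ℝ) → ℝ)
    (hsmooth : ∀ i j, ContDiff ℝ (⊤ : ℕ∞) (T' i j))
    (hsym : ∀ i j x, T' i j x = T' j i x)
    (htrans : ∀ i x, ∑ j, pd j (T' i j) x = 0)
    (T : Fin 3 → Fin 3 → (Fin 3 → ℝ) → ℝ)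
    (hT : ∀ i j x, T i j x = (1/2 : ℝ) * ∑ k, ∑ l,
      (eps3 k l i * pd l (T' j k) x + eps3 k l j * pd l (T' i k) x)) :
    (∀ i j x, T i j x = T j i x) ∧
    (∀ i x, ∑ j, pd j (T i j) x = 0) ∧
    (∀ x, ∑ i, T i i x = 0) := by
  have hs : ∀ a b, T' a b = T' b a := fun a b => funext (hsym a b)
  have hdiff : ∀ a b l, Differentiable ℝ (pd l (T' a b)) :=
    fun a b l => (pd_smooth l (hsmooth a b)).differentiable (ne_of_gt (lt_of_lt_of_le zero_lt_one one_le_top'))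
  -- derivative of the transversality identity
  have hz : ∀ a l x, pd l (pd 0 (T' a 0)) x + pd l (pd 1 (T' a 1)) x
      + pd l (pd 2 (T' a 2)) x = 0 := by
    intro a l x
    have h0 : pd l (fun y => ∑ j, pd j (T' a j) y) x = 0 := by
      have : (fun y => ∑ j, pd j (T' a j) y) = fun _ => (0:ℝ) :=
        funext fun y => htrans a y
      rw [this]
      unfold pd
      simp
    rw [pd_sum3 l _ (fun j => hdiff a j j) x] at h0
    simpa [Fin.sum_univ_three] using h0
  refine ⟨?_, ?_, ?_⟩
  · intro i j x
    rw [hT i j x, hT j i x]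
    refine congrArg _ (Finset.sum_congr rfl fun k _ => Finset.sum_congr rfl fun l _ => ?_)
    ring
  · intro i x
    have hseq : ∀ a b j l, pd j (pd l (T' a b)) x = pd j (pd l (T' b a)) x := by
      intro a b j l; rw [hs a b]
    have hcomm : ∀ a b j l, pd j (pd l (T' a b)) x = pd l (pd j (T' a b)) x :=
      fun a b j l => pd_comm j l (hsmooth a b) x
    have hTexp : ∀ i j, pd j (T i j) x = (1/2:ℝ) * ∑ k, ∑ l,
        (eps3 k l i * pd j (pd l (T' j k)) x + eps3 k l j * pd j (pd l (T' i k)) x) := by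
      intro i j
      rw [pd_of_eq j (hT i j)]
      exact pd_expand _ _ (fun k l => hdiff j k l) (fun k l => hdiff i k l) j x
    fin_cases i <;>
    · rw [Fin.sum_univ_three, hTexp _ 0, hTexp _ 1, hTexp _ 2]
      simp only [Fin.sum_univ_three, eps3]
      norm_num [Prod.ext_iff, Fin.ext_iff]
      try simp only [show ((⟨2, by norm_num⟩ : Fin 3)) = 2 from rfl,
        show ((⟨1, by norm_num⟩ : Fin 3)) = 1 from rfl,
        show ((⟨0, by norm_num⟩ : Fin 3)) = 0 from rfl]
      linarith [hz 0 0 x, hz 0 1 x, hz 0 2 x, hz 1 0 x, hz 1 1 x, hz 1 2 x,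
        hz 2 0 x, hz 2 1 x, hz 2 2 x,
        hseq 1 0 0 0, hseq 1 0 0 1, hseq 1 0 0 2, hseq 1 0 1 0, hseq 1 0 1 1, hseq 1 0 1 2,
        hseq 1 0 2 0, hseq 1 0 2 1, hseq 1 0 2 2,
        hseq 2 0 0 0, hseq 2 0 0 1, hseq 2 0 0 2, hseq 2 0 1 0, hseq 2 0 1 1, hseq 2 0 1 2,
        hseq 2 0 2 0, hseq 2 0 2 1, hseq 2 0 2 2,
        hseq 2 1 0 0, hseq 2 1 0 1, hseq 2 1 0 2, hseq 2 1 1 0, hseq 2 1 1 1, hseq 2 1 1 2,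
        hseq 2 1 2 0, hseq 2 1 2 1, hseq 2 1 2 2,
        hcomm 0 0 0 1, hcomm 0 0 0 2, hcomm 0 0 1 2,
        hcomm 0 1 0 1, hcomm 0 1 0 2, hcomm 0 1 1 2,
        hcomm 0 2 0 1, hcomm 0 2 0 2, hcomm 0 2 1 2,
        hcomm 1 0 0 1, hcomm 1 0 0 2, hcomm 1 0 1 2,
        hcomm 1 1 0 1, hcomm 1 1 0 2, hcomm 1 1 1 2,
        hcomm 1 2 0 1, hcomm 1 2 0 2, hcomm 1 2 1 2,
        hcomm 2 0 0 1, hcomm 2 0 0 2, hcomm 2 0 1 2,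
        hcomm 2 1 0 1, hcomm 2 1 0 2, hcomm 2 1 1 2,
        hcomm 2 2 0 1, hcomm 2 2 0 2, hcomm 2 2 1 2]
  · intro x
    have hseq1 : ∀ a b l, pd l (T' a b) x = pd l (T' b a) x := by
      intro a b l; rw [hs a b]
    rw [Fin.sum_univ_three, hT 0 0 x, hT 1 1 x, hT 2 2 x]
    simp only [Fin.sum_univ_three, eps3]
    norm_num [Prod.ext_iff, Fin.ext_iff]
    linarith [hseq1 1 0 0, hseq1 1 0 1, hseq1 1 0 2, hseq1 2 0 0, hseq1 2 0 1, hseq1 2 0 2,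
      hseq1 2 1 0, hseq1 2 1 1, hseq1 2 1 2]
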